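/- For an integer n ≥ 1, let Γ_n be the group with presentation ⟨ρ, σ, τ | ρ⁴ = σ^{2^{n+1}} = τ⁴ = 1, ρ² = σ^{2^n}·τ², [σ,τ] = 1, [ρ,σ] = σ², [ρ,τ] = σ^{2^n}·τ²⟩. Then Γ_n is a finite group of order 2^{n+4}, its abelianization is isomorphic to (Z/2Z)³, and its commutator subgroup is abelian, isomorphic to (Z/2Z) × (Z/2^n Z). -/

import Mathlib

namespace GammaPresentation

/-- The paper's commutator convention `[a,b] = a⁻¹b⁻¹ab`. -/
def comm {G : Type*} [Group G] (a b : G) : G := a⁻¹ * b⁻¹ * a * b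

/-- Generators `ρ`, `σ`, `τ` of the free group on three letters. -/
def ρ : FreeGroup (Fin 3) := FreeGroup.of 0

def σ : FreeGroup (Fin 3) := FreeGroup.of 1

def τ : FreeGroup (Fin 3) := FreeGroup.of 2

/-- The relations `ρ⁴ = σ^(2^(n+1)) = τ⁴ = 1`, `ρ² = σ^(2^n)·τ²`, `[σ,τ] = 1`,
`[ρ,σ] = σ²`, `[ρ,τ] = σ^(2^n)·τ²` defining `Γ_n`. -/
def rels (n : ℕ) : Set (FreeGroup (Fin 3)) :=
  {ρ ^ 4, σ ^ 2 ^ (n + 1), τ ^ 4,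
    ρ ^ 2 * (σ ^ 2 ^ n * τ ^ 2)⁻¹,
    comm σ τ,
    comm ρ σ * (σ ^ 2)⁻¹,
    comm ρ τ * (σ ^ 2 ^ n * τ ^ 2)⁻¹}

/-- The group `Γ_n` given by the above presentation. -/
def Gamma (n : ℕ) : Type := PresentedGroup (rels n)

instance (n : ℕ) : Group (Gamma n) := by unfold Gamma; infer_instance

end GammaPresentation

namespace GammaAux

variable (m : ℕ)

abbrev M (m : ℕ) : ℕ := 2 ^ (m + 2)

lemma hM0 : ((2:ZMod (M m)) ^ (m+2)) = 0 := by
  have : ((2^(m+2) : ℕ) : ZMod (M m)) = 0 := ZMod.natCast_self _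
  push_cast at this; exact this

lemma e_mul_two : (2 ^ (m+1) : ZMod (M m)) * 2 = 0 := by
  have := hM0 m; rw [pow_succ] at this; linear_combination this

/-- `σ`-coordinate contribution `2^(m+1) * b` for `b : ZMod 4`. -/
def χ (b : ZMod 4) : ZMod (M m) := 2 ^ (m+1) * (b.val : ZMod (M m))

lemma χ_mod (k : ℕ) : (2^(m+1) : ZMod (M m)) * ((k % 4 : ℕ) : ZMod (M m)) = 2^(m+1) * k := by
  conv_rhs => rw [← Nat.div_add_mod k 4]
  push_cast
  have := e_mul_two m
  linear_combination (-2 * ((k/4 : ℕ) : ZMod (M m))) * this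

lemma χ_natCast (k : ℕ) : χ m (k : ZMod 4) = 2^(m+1) * (k : ZMod (M m)) := by
  rw [χ, ZMod.val_natCast, χ_mod]

lemma χ_add (b b' : ZMod 4) : χ m (b + b') = χ m b + χ m b' := by
  rw [χ, χ, χ, ZMod.val_add, χ_mod]
  push_cast; ring

lemma χ_two_mul (b : ZMod 4) : χ m (2 * b) = 0 := by
  rw [χ, ZMod.val_mul, χ_mod]
  have : ((2:ZMod 4).val : ZMod (M m)) = 2 := by rw [show (2:ZMod 4).val = 2 from rfl]; norm_num
  push_cast [this]
  linear_combination (b.val : ZMod (M m)) * e_mul_two m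

lemma two_χ (b : ZMod 4) : χ m b * 2 = 0 := by
  rw [χ]; linear_combination (b.val : ZMod (M m)) * e_mul_two m

lemma χ_zero : χ m 0 = 0 := by simpa using χ_natCast m 0

lemma χ_two : χ m 2 = 0 := by
  have := χ_two_mul m 1
  norm_num at this; exact this

lemma χ_one : χ m 1 = 2^(m+1) := by simpa using χ_natCast m 1

structure Gc (m : ℕ) where
  a : ZMod (M m)
  b : ZMod 4
  c : Bool

instance : Mul (Gc m) :=
  ⟨fun x y => ⟨x.a + (cond x.c (-y.a + χ m y.b + cond y.c (2^(m+1)) 0) y.a),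
              x.b + y.b + cond x.c (2*y.b + cond y.c 2 0) 0,
              xor x.c y.c⟩⟩

instance : One (Gc m) := ⟨⟨0, 0, false⟩⟩

instance : Inv (Gc m) :=
  ⟨fun x => ⟨cond x.c (x.a + χ m x.b + 2^(m+1)) (-x.a), cond x.c (x.b + 2) (-x.b), x.c⟩⟩

lemma mk_mul (a1 a2 : ZMod (M m)) (b1 b2 : ZMod 4) (c1 c2 : Bool) :
    (Gc.mk a1 b1 c1) * (Gc.mk a2 b2 c2) =
      ⟨a1 + (cond c1 (-a2 + χ m b2 + cond c2 (2^(m+1)) 0) a2),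
       b1 + b2 + cond c1 (2*b2 + cond c2 2 0) 0,
       xor c1 c2⟩ := rfl

lemma one_def : (1 : Gc m) = ⟨0, 0, false⟩ := rfl

lemma mk_inv (a : ZMod (M m)) (b : ZMod 4) (c : Bool) :
    (Gc.mk a b c)⁻¹ = ⟨cond c (a + χ m b + 2^(m+1)) (-a), cond c (b + 2) (-b), c⟩ := rfl

instance : Group (Gc m) := by
  apply Group.ofLeftAxioms
  · rintro ⟨a1,b1,c1⟩ ⟨a2,b2,c2⟩ ⟨a3,b3,c3⟩
    cases c1 <;> cases c2 <;> cases c3 <;>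
      simp only [mk_mul, cond_true, cond_false, Bool.xor_false, Bool.xor_true,
        Bool.false_xor, Bool.true_xor, Bool.not_true, Bool.not_false,
        χ_add, χ_two_mul, χ_two, χ_zero, Gc.mk.injEq] <;>
      refine ⟨?_, ?_, by trivial⟩ <;>
      first
        | ring1
        | (linear_combination e_mul_two m)
        | (clear a1 a2 a3; revert b1 b2 b3; decide)
        | skip
  · rintro ⟨a,b,c⟩
    simp [one_def, mk_mul]
  · rintro ⟨a,b,c⟩
    cases c <;>
      simp only [mk_inv, mk_mul, one_def, cond_true, cond_false, Bool.xor_self,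
        χ_add, χ_two, χ_zero, Gc.mk.injEq] <;>
      refine ⟨?_, ?_, by trivial⟩ <;>
      first
        | ring1
        | (linear_combination two_χ m b + e_mul_two m)
        | (revert b; decide)
        | skip



/-! Generators of `Gc` -/

def R0 : Gc m := ⟨0, 0, true⟩
def S0 : Gc m := ⟨1, 0, false⟩
def T0 : Gc m := ⟨0, 1, false⟩

lemma pow_false (a : ZMod (M m)) (b : ZMod 4) (k : ℕ) :
    (Gc.mk a b false : Gc m) ^ k = ⟨k * a, k * b, false⟩ := by
  induction k with
  | zero => simp [one_def]
  | succ k ih =>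
      rw [pow_succ, ih, mk_mul]
      simp only [cond_false, Bool.xor_false]
      push_cast
      refine congrArg₂ (fun u v => Gc.mk u v _) (by ring) (by ring)

lemma S0_pow (k : ℕ) : (S0 m) ^ k = ⟨(k : ZMod (M m)), 0, false⟩ := by
  rw [S0, pow_false]; simp

lemma T0_pow (k : ℕ) : (T0 m) ^ k = ⟨0, (k : ZMod 4), false⟩ := by
  rw [T0, pow_false]; simp

lemma R0_sq : (R0 m) ^ 2 = ⟨2^(m+1), 2, false⟩ := by
  rw [pow_two, R0, mk_mul]
  simp [χ_zero]

lemma R0_pow4 : (R0 m) ^ 4 = 1 := by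
  have : (4:ℕ) = 2*2 := rfl
  rw [this, pow_mul, R0_sq, pow_false, one_def]
  refine congrArg₂ (fun u v => Gc.mk u v _) ?_ (by decide)
  push_cast
  linear_combination e_mul_two m

lemma S0_pow_M : (S0 m) ^ (M m) = 1 := by
  rw [S0_pow, one_def, ZMod.natCast_self]

lemma T0_pow4 : (T0 m) ^ 4 = 1 := by
  rw [T0_pow, one_def]
  refine congrArg₂ (fun u v => Gc.mk u v _) rfl (by exact_mod_cast ZMod.natCast_self 4)

lemma mk_false_mul (a a' : ZMod (M m)) (b b' : ZMod 4) :
    (Gc.mk a b false : Gc m) * ⟨a', b', false⟩ = ⟨a + a', b + b', false⟩ := by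
  rw [mk_mul]; simp

lemma rel4 : (R0 m) ^ 2 = (S0 m) ^ (2^(m+1)) * (T0 m) ^ 2 := by
  rw [R0_sq, S0_pow, T0_pow, mk_false_mul]
  push_cast
  simp

open GammaPresentation

lemma χ_neg_zero : χ m (-0) = 0 := by rw [neg_zero, χ_zero]

lemma χ_neg_one : χ m (-1) = 2^(m+1) := by
  rw [show (-1 : ZMod 4) = 1 + 2 by decide, χ_add, χ_one, χ_two, add_zero]

lemma R0_inv : (R0 m)⁻¹ = ⟨2^(m+1), 2, true⟩ := by
  rw [R0, mk_inv]; simp [χ_zero]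

lemma rel5 : GammaPresentation.comm (S0 m) (T0 m) = 1 := by
  simp only [GammaPresentation.comm, S0, T0, mk_inv, mk_mul, cond_false, cond_true, Bool.xor_false, one_def]
  refine congrArg₂ (fun u v => Gc.mk u v _) (by ring) (by ring)

lemma rel6 : GammaPresentation.comm (R0 m) (S0 m) = (S0 m)^2 := by
  rw [GammaPresentation.comm, R0_inv, R0, S0]
  rw [pow_two]
  simp only [mk_inv, mk_mul, cond_false, cond_true, Bool.xor_false, Bool.xor_true,
    Bool.true_xor, Bool.false_xor, Bool.not_true, χ_zero, χ_neg_zero, χ_add, χ_neg_one]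
  refine congrArg₂ (fun u v => Gc.mk u v _) ?_ ?_
  · push_cast
    first | ring1 | linear_combination e_mul_two m
  · first | ring1 | decide | ring_nf

lemma rel7 : GammaPresentation.comm (R0 m) (T0 m) = (S0 m)^(2^(m+1)) * (T0 m)^2 := by
  rw [GammaPresentation.comm, R0_inv, R0, S0_pow, T0_pow, T0]
  simp only [mk_inv, mk_mul, cond_false, cond_true, Bool.xor_false, Bool.xor_true,
    Bool.true_xor, Bool.false_xor, Bool.not_true, χ_zero, χ_neg_zero, χ_add, χ_neg_one, χ_one]
  refine congrArg₂ (fun u v => Gc.mk u v _) ?_ ?_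
  · push_cast
    first | ring1 | linear_combination e_mul_two m | linear_combination 2 * e_mul_two m
  · first | ring1 | decide | ring_nf

def gen : Fin 3 → Gc m
  | 0 => R0 m
  | 1 => S0 m
  | 2 => T0 m

lemma lift_rels : ∀ r ∈ rels (m+1), FreeGroup.lift (gen m) r = 1 := by
  intro r hr
  have hmem : r = ρ^4 ∨ r = σ ^ 2^(m+1+1) ∨ r = τ^4 ∨ r = ρ^2 * (σ^2^(m+1) * τ^2)⁻¹ ∨
      r = GammaPresentation.comm σ τ ∨ r = GammaPresentation.comm ρ σ * (σ^2)⁻¹ ∨ r = GammaPresentation.comm ρ τ * (σ^2^(m+1) * τ^2)⁻¹ := by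
    simpa [rels, Set.mem_insert_iff] using hr
  have hρ : FreeGroup.lift (gen m) ρ = R0 m := FreeGroup.lift_apply_of
  have hσ : FreeGroup.lift (gen m) σ = S0 m := FreeGroup.lift_apply_of
  have hτ : FreeGroup.lift (gen m) τ = T0 m := FreeGroup.lift_apply_of
  rcases hmem with rfl|rfl|rfl|rfl|rfl|rfl|rfl
  · rw [map_pow, hρ, R0_pow4]
  · rw [map_pow, hσ]
    have : m+1+1 = m+2 := rfl
    rw [this, S0_pow_M]
  · rw [map_pow, hτ, T0_pow4]
  · rw [map_mul, map_inv, map_mul, map_pow, map_pow, map_pow, hρ, hσ, hτ]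
    exact mul_inv_eq_one.mpr (rel4 m)
  · simp only [GammaPresentation.comm, map_mul, map_inv, hσ, hτ]
    exact rel5 m
  · simp only [GammaPresentation.comm, map_mul, map_inv, map_pow, hρ, hσ]
    refine mul_inv_eq_one.mpr ?_
    have := rel6 m
    simpa [GammaPresentation.comm] using this
  · simp only [GammaPresentation.comm, map_mul, map_inv, map_pow, hρ, hσ, hτ]
    refine mul_inv_eq_one.mpr ?_
    have := rel7 m
    simpa [GammaPresentation.comm] using this

def φG : Gamma (m+1) →* Gc m := PresentedGroup.toGroup (lift_rels m)

lemma φG_of (i : Fin 3) : φG m (PresentedGroup.of i) = gen m i := PresentedGroup.toGroup.of _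

/-! Relations inside the presented group -/

def RR : Gamma (m+1) := PresentedGroup.of 0
def SS : Gamma (m+1) := PresentedGroup.of 1
def TT : Gamma (m+1) := PresentedGroup.of 2

lemma mk_ρ : PresentedGroup.mk (rels (m+1)) ρ = RR m := rfl
lemma mk_σ : PresentedGroup.mk (rels (m+1)) σ = SS m := rfl
lemma mk_τ : PresentedGroup.mk (rels (m+1)) τ = TT m := rfl

lemma key_rel : ∀ r ∈ rels (m+1), PresentedGroup.mk (rels (m+1)) r = 1 := fun r hr =>
  (QuotientGroup.eq_one_iff _).mpr (Subgroup.subset_normalClosure hr)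

lemma hR4 : RR m ^ 4 = 1 := by
  have := key_rel m (ρ^4) (Set.mem_insert _ _)
  simp [map_pow, mk_ρ] at this; exact this

lemma hSM : SS m ^ (2^(m+2)) = 1 := by
  have := key_rel m (σ ^ 2^(m+1+1)) (by
    repeat first | exact Set.mem_insert _ _ | exact Set.mem_singleton _ | apply Set.mem_insert_of_mem)
  simp [map_pow, mk_σ] at this; exact this

lemma hT4 : TT m ^ 4 = 1 := by
  have := key_rel m (τ^4) (by
    repeat first | exact Set.mem_insert _ _ | exact Set.mem_singleton _ | apply Set.mem_insert_of_mem)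
  simp [map_pow, mk_τ] at this; exact this

lemma hR2 : RR m ^ 2 = SS m ^ (2^(m+1)) * TT m ^ 2 := by
  have := key_rel m (ρ^2 * (σ^2^(m+1) * τ^2)⁻¹) (by
    repeat first | exact Set.mem_insert _ _ | exact Set.mem_singleton _ | apply Set.mem_insert_of_mem)
  simp only [map_mul, map_inv, map_pow, mk_ρ, mk_σ, mk_τ] at this
  exact mul_inv_eq_one.mp this

lemma hST : SS m * TT m = TT m * SS m := by
  have h := key_rel m (GammaPresentation.comm σ τ) (by
    repeat first | exact Set.mem_insert _ _ | exact Set.mem_singleton _ | apply Set.mem_insert_of_mem)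
  simp only [GammaPresentation.comm, map_mul, map_inv, mk_σ, mk_τ] at h
  have : SS m * TT m = (TT m * SS m) * ((SS m)⁻¹ * (TT m)⁻¹ * SS m * TT m) := by group
  rw [show (SS m)⁻¹ * (TT m)⁻¹ * SS m * TT m = 1 from h, mul_one] at this
  exact this

lemma hRS : (RR m)⁻¹ * (SS m)⁻¹ * RR m * SS m = SS m ^ 2 := by
  have h := key_rel m (GammaPresentation.comm ρ σ * (σ^2)⁻¹) (by
    repeat first | exact Set.mem_insert _ _ | exact Set.mem_singleton _ | apply Set.mem_insert_of_mem)
  simp only [GammaPresentation.comm, map_mul, map_inv, map_pow, mk_ρ, mk_σ] at h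
  exact mul_inv_eq_one.mp h

lemma hRT : (RR m)⁻¹ * (TT m)⁻¹ * RR m * TT m = SS m ^ (2^(m+1)) * TT m ^ 2 := by
  have h := key_rel m (GammaPresentation.comm ρ τ * (σ^2^(m+1) * τ^2)⁻¹) (by
    repeat first | exact Set.mem_insert _ _ | exact Set.mem_singleton _ | apply Set.mem_insert_of_mem)
  simp only [GammaPresentation.comm, map_mul, map_inv, map_pow, mk_ρ, mk_σ, mk_τ] at h
  exact mul_inv_eq_one.mp h

/-! Derived identities -/

lemma e1 : (RR m)⁻¹ * (SS m)⁻¹ * RR m = SS m := by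
  have : (RR m)⁻¹ * (SS m)⁻¹ * RR m = ((RR m)⁻¹ * (SS m)⁻¹ * RR m * SS m) * (SS m)⁻¹ := by group
  rw [hRS m] at this
  rw [this]; group

lemma hRS' : RR m * SS m = (SS m)⁻¹ * RR m := by
  have : (SS m)⁻¹ * RR m = RR m * ((RR m)⁻¹ * (SS m)⁻¹ * RR m) := by group
  rw [e1 m] at this; exact this.symm

lemma e2 : (RR m)⁻¹ * SS m * RR m = (SS m)⁻¹ := by
  have : (RR m)⁻¹ * SS m * RR m = ((RR m)⁻¹ * (SS m)⁻¹ * RR m)⁻¹ := by group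
  rw [e1 m] at this; exact this

lemma hww : SS m ^ (2^(m+1)) * SS m ^ (2^(m+1)) = 1 := by
  rw [← pow_add, show 2^(m+1) + 2^(m+1) = 2^(m+1+1) by ring]
  exact hSM m

lemma hwinv : (SS m ^ (2^(m+1)))⁻¹ = SS m ^ (2^(m+1)) :=
  inv_eq_of_mul_eq_one_right (hww m)

lemma hTinv : (TT m)⁻¹ = TT m ^ 3 :=
  inv_eq_of_mul_eq_one_left (by rw [← pow_succ]; exact hT4 m)

lemma commST : Commute (SS m) (TT m) := hST m

/-- conjugation by `R⁻¹` -/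
def φc : MulAut (Gamma (m+1)) := MulAut.conj (RR m)⁻¹

lemma φc_apply (x : Gamma (m+1)) : φc m x = (RR m)⁻¹ * x * RR m := by
  simp [φc, MulAut.conj_apply]

lemma φc_S : φc m (SS m) = (SS m)⁻¹ := by rw [φc_apply]; exact e2 m

lemma φc_w : φc m (SS m ^ (2^(m+1))) = SS m ^ (2^(m+1)) := by
  rw [map_pow, φc_S, inv_pow, hwinv]

lemma e3 : (RR m)⁻¹ * (TT m)⁻¹ * RR m = SS m ^ (2^(m+1)) * TT m := by
  have h : (RR m)⁻¹ * (TT m)⁻¹ * RR m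
      = ((RR m)⁻¹ * (TT m)⁻¹ * RR m * TT m) * (TT m)⁻¹ := by group
  rw [hRT m] at h
  rw [h, mul_assoc, pow_two, mul_assoc, mul_inv_cancel, mul_one]

lemma φc_T : φc m (TT m) = SS m ^ (2^(m+1)) * TT m ^ 3 := by
  rw [φc_apply]
  have h : (RR m)⁻¹ * TT m * RR m = ((RR m)⁻¹ * (TT m)⁻¹ * RR m)⁻¹ := by group
  rw [h, e3 m, mul_inv_rev, hwinv m, hTinv m]
  exact (((commST m).pow_left (2^(m+1))).pow_right 3).symm.eq

lemma key6 : (RR m)⁻¹ * (SS m ^ (2^(m+1)) * TT m ^ 3) * RR m = TT m := by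
  have this : φc m (SS m ^ (2^(m+1)) * TT m ^ 3) = TT m := by
    rw [map_mul, map_pow, map_pow, φc_S, φc_T, inv_pow, hwinv]
    have hc : Commute (SS m ^ (2^(m+1))) (TT m ^ 3) := ((commST m).pow_left _).pow_right 3
    rw [hc.mul_pow, ← pow_mul, ← pow_mul, ← mul_assoc, ← pow_add]
    have h1 : SS m ^ (2^(m+1) + 2^(m+1)*3) = 1 := by
      rw [show 2^(m+1) + 2^(m+1)*3 = 2^(m+1+1)*2 by ring, pow_mul, hSM, one_pow]
    have h2 : TT m ^ (3*3) = TT m := by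
      rw [show (3*3 : ℕ) = 4*2+1 by norm_num, pow_succ, pow_mul, hT4, one_pow, one_mul]
    rw [h1, one_mul, h2]
  rw [← φc_apply]; exact this

lemma hRT' : RR m * TT m = SS m ^ (2^(m+1)) * TT m ^ 3 * RR m := by
  conv_lhs => rw [← key6 m]
  group

/-! Normal form and cardinality -/

instance : NeZero (M m) := ⟨by positivity⟩

lemma TS_pow (i : ℕ) : TT m * SS m ^ i = SS m ^ i * TT m := ((commST m).symm.pow_right i).eq

lemma hSinv : (SS m)⁻¹ = SS m ^ (M m - 1) :=
  inv_eq_of_mul_eq_one_left (by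
    rw [← pow_succ, Nat.sub_add_cancel Nat.one_le_two_pow]; exact hSM m)

lemma RS_pow (i : ℕ) : RR m * SS m ^ i = SS m ^ ((M m - 1) * i) * RR m := by
  have h : SemiconjBy (RR m) (SS m) ((SS m)⁻¹) := hRS' m
  have := (h.pow_right i).eq
  rw [this, hSinv, ← pow_mul]

lemma RT_pow (j : ℕ) : RR m * TT m ^ j = SS m ^ (2^(m+1) * j) * TT m ^ (3 * j) * RR m := by
  have h : SemiconjBy (RR m) (TT m) (SS m ^ (2^(m+1)) * TT m ^ 3) := hRT' m
  have hc : Commute (SS m ^ (2^(m+1))) (TT m ^ 3) := ((commST m).pow_left _).pow_right 3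
  have := (h.pow_right j).eq
  rw [this, hc.mul_pow, ← pow_mul, ← pow_mul]

def NF : Set (Gamma (m+1)) :=
  {g | ∃ i j k : ℕ, k ≤ 1 ∧ g = SS m ^ i * TT m ^ j * RR m ^ k}

lemma one_mem_NF : (1 : Gamma (m+1)) ∈ NF m := ⟨0, 0, 0, Nat.zero_le _, by simp⟩

lemma NF_S {g : Gamma (m+1)} (h : g ∈ NF m) : SS m * g ∈ NF m := by
  obtain ⟨i, j, k, hk, rfl⟩ := h
  exact ⟨i+1, j, k, hk, by rw [pow_succ']; group⟩

lemma NF_T {g : Gamma (m+1)} (h : g ∈ NF m) : TT m * g ∈ NF m := by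
  obtain ⟨i, j, k, hk, rfl⟩ := h
  refine ⟨i, j+1, k, hk, ?_⟩
  rw [← mul_assoc, ← mul_assoc, TS_pow, pow_succ']
  group

lemma NF_R {g : Gamma (m+1)} (h : g ∈ NF m) : RR m * g ∈ NF m := by
  obtain ⟨i, j, k, hk, rfl⟩ := h
  have step : RR m * (SS m ^ i * TT m ^ j * RR m ^ k)
      = SS m ^ ((M m - 1) * i + 2^(m+1) * j) * TT m ^ (3*j) * RR m ^ (k+1) := by
    calc RR m * (SS m ^ i * TT m ^ j * RR m ^ k)
        = (RR m * SS m ^ i) * TT m ^ j * RR m ^ k := by group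
      _ = SS m ^ ((M m - 1) * i) * (RR m * TT m ^ j) * RR m ^ k := by rw [RS_pow]; group
      _ = SS m ^ ((M m - 1) * i) * (SS m ^ (2^(m+1) * j) * TT m ^ (3 * j) * RR m) * RR m ^ k := by
          rw [RT_pow]
      _ = SS m ^ ((M m - 1) * i + 2^(m+1) * j) * TT m ^ (3*j) * RR m ^ (k+1) := by
          rw [pow_add, pow_succ]; group
  interval_cases k
  · exact ⟨_, _, 1, le_refl _, by simpa using step⟩
  · refine ⟨(M m - 1) * i + 2^(m+1) * j + 2^(m+1), 3*j + 2, 0, Nat.zero_le _, ?_⟩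
    rw [step, pow_zero, mul_one, show (1+1 : ℕ) = 2 from rfl, hR2 m]
    have hc : Commute (TT m ^ (3*j)) (SS m ^ (2^(m+1))) :=
      (((commST m).pow_left _).pow_right _).symm
    calc SS m ^ ((M m-1)*i + 2^(m+1)*j) * TT m ^ (3*j) * (SS m ^ 2^(m+1) * TT m ^ 2)
        = SS m ^ ((M m-1)*i + 2^(m+1)*j) * (TT m ^ (3*j) * SS m ^ 2^(m+1)) * TT m ^ 2 := by group
      _ = SS m ^ ((M m-1)*i + 2^(m+1)*j) * (SS m ^ 2^(m+1) * TT m ^ (3*j)) * TT m ^ 2 := by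
          rw [hc.eq]
      _ = (SS m ^ ((M m-1)*i + 2^(m+1)*j) * SS m ^ 2^(m+1)) * (TT m ^ (3*j) * TT m ^ 2) := by
          group
      _ = SS m ^ ((M m-1)*i + 2^(m+1)*j + 2^(m+1)) * TT m ^ (3*j + 2) := by
          rw [← pow_add, ← pow_add]

lemma NF_pow_stable (x : Gamma (m+1)) (hx : ∀ g ∈ NF m, x * g ∈ NF m) :
    ∀ p, ∀ g ∈ NF m, x ^ p * g ∈ NF m := by
  intro p
  induction p with
  | zero => intro g hg; simpa using hg
  | succ p ih =>
      intro g hg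
      rw [pow_succ', mul_assoc]
      exact hx _ (ih g hg)

lemma NF_inv_step (x : Gamma (m+1)) (q : ℕ) (hq1 : 1 ≤ q) (hq : x ^ q = 1)
    (hx : ∀ g ∈ NF m, x * g ∈ NF m) :
    ∀ g ∈ NF m, x⁻¹ * g ∈ NF m := by
  intro g hg
  have hstep : x * x ^ (q - 1) = 1 := by
    rw [← pow_succ', Nat.sub_add_cancel hq1]; exact hq
  have hinv : x⁻¹ = x ^ (q - 1) := inv_eq_of_mul_eq_one_right hstep
  rw [hinv]
  exact NF_pow_stable m x hx (q-1) g hg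

lemma NF_all (g : Gamma (m+1)) : g ∈ NF m := by
  have htop : g ∈ Subgroup.closure (Set.range (PresentedGroup.of :
      Fin 3 → PresentedGroup (rels (m+1)))) := by
    rw [PresentedGroup.closure_range_of]; trivial
  refine Subgroup.closure_induction_left (one_mem_NF m) ?_ ?_ htop
  · rintro x ⟨i, rfl⟩ y hy hmem
    fin_cases i
    · exact NF_R m hmem
    · exact NF_S m hmem
    · exact NF_T m hmem
  · rintro x ⟨i, rfl⟩ y hy hmem
    fin_cases i
    · exact NF_inv_step m (RR m) 4 (by norm_num) (hR4 m) (fun g hg => NF_R m hg) y hmem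
    · exact NF_inv_step m (SS m) (M m) Nat.one_le_two_pow (hSM m) (fun g hg => NF_S m hg) y hmem
    · exact NF_inv_step m (TT m) 4 (by norm_num) (hT4 m) (fun g hg => NF_T m hg) y hmem

lemma pow_natCast_val {G : Type*} [Group G] (x : G) (q : ℕ) [NeZero q] (h : x ^ q = 1)
    (i : ℕ) : x ^ ((i : ZMod q)).val = x ^ i := by
  rw [ZMod.val_natCast]; exact (pow_eq_pow_mod i h).symm

def nfMap : ZMod (M m) × ZMod 4 × ZMod 2 → Gamma (m+1) :=
  fun t => SS m ^ t.1.val * TT m ^ t.2.1.val * RR m ^ t.2.2.val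

lemma nfMap_surj : Function.Surjective (nfMap m) := by
  intro g
  obtain ⟨i, j, k, hk, rfl⟩ := NF_all m g
  refine ⟨(i, j, k), ?_⟩
  have h1 : SS m ^ ((i : ZMod (M m))).val = SS m ^ i := pow_natCast_val _ _ (hSM m) i
  have h2 : TT m ^ ((j : ZMod 4)).val = TT m ^ j := pow_natCast_val _ _ (hT4 m) j
  have h3 : RR m ^ ((k : ZMod 2)).val = RR m ^ k := by
    interval_cases k
    · simp
    · rw [show ((1:ℕ) : ZMod 2).val = 1 from rfl]
  rw [nfMap, h1, h2, h3]

instance : Finite (Gamma (m+1)) := Finite.of_surjective _ (nfMap_surj m)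

lemma card_Gamma_le : Nat.card (Gamma (m+1)) ≤ 2^(m+5) := by
  have := Nat.card_le_card_of_surjective _ (nfMap_surj m)
  calc Nat.card (Gamma (m+1)) ≤ Nat.card (ZMod (M m) × ZMod 4 × ZMod 2) := this
    _ = 2^(m+5) := by
        rw [Nat.card_prod, Nat.card_prod, Nat.card_zmod, Nat.card_zmod, Nat.card_zmod]
        ring

/-! Surjectivity of `φG` and the isomorphism -/

lemma φG_S_pow (i : ℕ) : φG m (SS m ^ i) = ⟨(i : ZMod (M m)), 0, false⟩ := by
  rw [map_pow]
  have : φG m (SS m) = S0 m := φG_of m 1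
  rw [this, S0_pow]

lemma φG_T_pow (j : ℕ) : φG m (TT m ^ j) = ⟨0, (j : ZMod 4), false⟩ := by
  rw [map_pow]
  have : φG m (TT m) = T0 m := φG_of m 2
  rw [this, T0_pow]

lemma φG_R : φG m (RR m) = R0 m := φG_of m 0

lemma φG_surj : Function.Surjective (φG m) := by
  rintro ⟨a, b, c⟩
  cases c
  · refine ⟨SS m ^ a.val * TT m ^ b.val, ?_⟩
    rw [map_mul, φG_S_pow, φG_T_pow, mk_false_mul]
    congr 1 <;> simp [ZMod.natCast_val, ZMod.cast_id']
  · refine ⟨SS m ^ a.val * TT m ^ b.val * RR m, ?_⟩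
    rw [map_mul, map_mul, φG_S_pow, φG_T_pow, φG_R, mk_false_mul, R0, mk_mul]
    simp only [cond_false, Bool.xor_false, Bool.xor_true]
    congr 1 <;> simp [ZMod.natCast_val, ZMod.cast_id']

def gcEquiv : Gc m ≃ ZMod (M m) × ZMod 4 × Bool where
  toFun x := (x.a, x.b, x.c)
  invFun p := ⟨p.1, p.2.1, p.2.2⟩
  left_inv := by rintro ⟨a, b, c⟩; rfl
  right_inv := by rintro ⟨a, b, c⟩; rfl

lemma card_Gc : Nat.card (Gc m) = 2^(m+5) := by
  rw [Nat.card_congr (gcEquiv m), Nat.card_prod, Nat.card_prod, Nat.card_zmod, Nat.card_zmod]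
  rw [show Nat.card Bool = 2 by simp [Nat.card_eq_fintype_card]]
  ring

lemma card_Gamma : Nat.card (Gamma (m+1)) = 2^(m+5) := by
  refine le_antisymm (card_Gamma_le m) ?_
  have := Nat.card_le_card_of_surjective _ (φG_surj m)
  rw [card_Gc m] at this
  exact this

lemma φG_bij : Function.Bijective (φG m) :=
  (Nat.bijective_iff_surjective_and_card _).mpr ⟨φG_surj m, by rw [card_Gamma, card_Gc]⟩

noncomputable def eIso : Gamma (m+1) ≃* Gc m := MulEquiv.ofBijective _ (φG_bij m)

/-! Abelianization -/

abbrev A3 : Type := Multiplicative (ZMod 2) × Multiplicative (ZMod 2) × Multiplicative (ZMod 2)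

lemma comm_grp_comm_one {H : Type*} [CommGroup H] (x y : H) : x⁻¹ * y⁻¹ * x * y = 1 := by
  have h : x⁻¹ * y⁻¹ * x * y = x⁻¹ * y⁻¹ * (x * y) := by group
  rw [h, mul_comm x y]
  group

def genA : Fin 3 → A3
  | 0 => (Multiplicative.ofAdd 1, 1, 1)
  | 1 => (1, Multiplicative.ofAdd 1, 1)
  | 2 => (1, 1, Multiplicative.ofAdd 1)

lemma genA_sq (i : Fin 3) : genA i ^ 2 = 1 := by fin_cases i <;> decide

lemma genA_even (i : Fin 3) (k : ℕ) : genA i ^ (2 * k) = 1 := by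
  rw [pow_mul, genA_sq, one_pow]

lemma lift_rels_A : ∀ r ∈ rels (m+1), FreeGroup.lift genA r = 1 := by
  intro r hr
  have hmem : r = ρ^4 ∨ r = σ ^ 2^(m+1+1) ∨ r = τ^4 ∨ r = ρ^2 * (σ^2^(m+1) * τ^2)⁻¹ ∨
      r = GammaPresentation.comm σ τ ∨ r = GammaPresentation.comm ρ σ * (σ^2)⁻¹ ∨
      r = GammaPresentation.comm ρ τ * (σ^2^(m+1) * τ^2)⁻¹ := by
    simpa [rels, Set.mem_insert_iff] using hr
  have hρ : FreeGroup.lift genA ρ = genA 0 := FreeGroup.lift_apply_of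
  have hσ : FreeGroup.lift genA σ = genA 1 := FreeGroup.lift_apply_of
  have hτ : FreeGroup.lift genA τ = genA 2 := FreeGroup.lift_apply_of
  have h2m1 : (2:ℕ)^(m+1) = 2 * 2^m := by ring
  have h2m2 : (2:ℕ)^(m+1+1) = 2 * 2^(m+1) := by ring
  rcases hmem with rfl|rfl|rfl|rfl|rfl|rfl|rfl
  · rw [map_pow, hρ, show (4:ℕ) = 2*2 from rfl, genA_even]
  · rw [map_pow, hσ, h2m2, genA_even]
  · rw [map_pow, hτ, show (4:ℕ) = 2*2 from rfl, genA_even]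
  · rw [map_mul, map_inv, map_mul, map_pow, map_pow, map_pow, hρ, hσ, hτ, h2m1, genA_even]
    simp [genA_sq]
  · simp only [GammaPresentation.comm, map_mul, map_inv, hσ, hτ]
    exact comm_grp_comm_one _ _
  · simp only [GammaPresentation.comm, map_mul, map_inv, map_pow, hρ, hσ]
    rw [comm_grp_comm_one]
    simp [genA_sq]
  · simp only [GammaPresentation.comm, map_mul, map_inv, map_pow, hρ, hσ, hτ]
    rw [comm_grp_comm_one, h2m1, genA_even]
    simp [genA_sq]

def qA : Gamma (m+1) →* A3 := PresentedGroup.toGroup (lift_rels_A m)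

lemma qA_of (i : Fin 3) : qA m (PresentedGroup.of i) = genA i := PresentedGroup.toGroup.of _

/-- homomorphism from `Multiplicative (ZMod q)` determined by an element whose
`q`-th power is `1`. -/
def homZM {H : Type*} [Group H] (q : ℕ) [NeZero q] (h : H) (hh : h ^ q = 1) :
    Multiplicative (ZMod q) →* H where
  toFun x := h ^ (Multiplicative.toAdd x).val
  map_one' := by
    show h ^ (Multiplicative.toAdd (1 : Multiplicative (ZMod q))).val = 1
    rw [show (Multiplicative.toAdd (1 : Multiplicative (ZMod q))).val = 0 by
      rw [toAdd_one, ZMod.val_zero], pow_zero]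
  map_mul' x y := by
    show h ^ ((Multiplicative.toAdd (x * y)).val) = _
    rw [toAdd_mul, ZMod.val_add, ← pow_eq_pow_mod _ hh, pow_add]

lemma homZM_apply {H : Type*} [Group H] (q : ℕ) [NeZero q] (h : H) (hh : h ^ q = 1)
    (x : Multiplicative (ZMod q)) : homZM q h hh x = h ^ (Multiplicative.toAdd x).val := rfl

lemma ofAdd_one_pow_val (q : ℕ) [NeZero q] (x : Multiplicative (ZMod q)) :
    (Multiplicative.ofAdd (1 : ZMod q)) ^ (Multiplicative.toAdd x).val = x := by
  rw [← ofAdd_nsmul, nsmul_eq_mul, mul_one]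
  rw [ZMod.natCast_rightInverse _]
  rfl

section AbPart
variable (m : ℕ)

local notation "Ab" => Abelianization (Gamma (m+1))

lemma ab_comm_one (a b : Gamma (m+1)) : Abelianization.of (a⁻¹ * b⁻¹ * a * b) = 1 := by
  rw [map_mul, map_mul, map_mul, map_inv, map_inv]
  exact comm_grp_comm_one _ _

lemma hS2ab : (Abelianization.of (SS m)) ^ 2 = 1 := by
  have h := congrArg Abelianization.of (hRS m)
  rw [ab_comm_one, map_pow] at h
  exact h.symm

lemma hwT2ab : (Abelianization.of (SS m)) ^ (2^(m+1)) * (Abelianization.of (TT m)) ^ 2 = 1 := by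
  have h := congrArg Abelianization.of (hRT m)
  rw [ab_comm_one, map_mul, map_pow, map_pow] at h
  exact h.symm

lemma hSwab : (Abelianization.of (SS m)) ^ (2^(m+1)) = 1 := by
  rw [show (2:ℕ)^(m+1) = 2 * 2^m by ring, pow_mul, hS2ab, one_pow]

lemma hT2ab : (Abelianization.of (TT m)) ^ 2 = 1 := by
  have := hwT2ab m
  rwa [hSwab, one_mul] at this

lemma hR2ab : (Abelianization.of (RR m)) ^ 2 = 1 := by
  have h := congrArg Abelianization.of (hR2 m)
  rw [map_pow, map_mul, map_pow, map_pow] at h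
  rw [h, hSwab, one_mul, hT2ab]

noncomputable def pA : A3 →* Ab :=
  ((homZM 2 (Abelianization.of (RR m)) (hR2ab m)).comp (MonoidHom.fst _ _)) *
  (((homZM 2 (Abelianization.of (SS m)) (hS2ab m)).comp
      ((MonoidHom.fst _ _).comp (MonoidHom.snd _ _)))) *
  (((homZM 2 (Abelianization.of (TT m)) (hT2ab m)).comp
      ((MonoidHom.snd _ _).comp (MonoidHom.snd _ _))))

noncomputable def qbarA : Ab →* A3 := Abelianization.lift (qA m)

lemma pA_apply (x y z : Multiplicative (ZMod 2)) :
    pA m (x, y, z) = Abelianization.of (RR m) ^ (Multiplicative.toAdd x).val *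
      Abelianization.of (SS m) ^ (Multiplicative.toAdd y).val *
      Abelianization.of (TT m) ^ (Multiplicative.toAdd z).val := rfl

lemma qbarA_of (g : Gamma (m+1)) : qbarA m (Abelianization.of g) = qA m g :=
  Abelianization.lift_apply_of _ _

lemma comp_qbarA_pA : (qbarA m).comp (pA m) = MonoidHom.id A3 := by
  refine MonoidHom.ext ?_
  rintro ⟨x, y, z⟩
  show qbarA m (pA m (x, y, z)) = (x, y, z)
  rw [pA_apply, map_mul, map_mul, map_pow, map_pow, map_pow,
    qbarA_of, qbarA_of, qbarA_of]
  rw [show qA m (RR m) = genA 0 from qA_of m 0,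
    show qA m (SS m) = genA 1 from qA_of m 1,
    show qA m (TT m) = genA 2 from qA_of m 2]
  simp only [genA, Prod.pow_mk, Prod.mk_mul_mk, one_pow, one_mul, mul_one]
  rw [ofAdd_one_pow_val, ofAdd_one_pow_val, ofAdd_one_pow_val]

lemma comp_pA_qbarA : (pA m).comp (qbarA m) = MonoidHom.id Ab := by
  apply Abelianization.hom_ext
  apply PresentedGroup.ext
  intro i
  show pA m (qbarA m (Abelianization.of (G := Gamma (m+1)) (PresentedGroup.of i))) = Abelianization.of _
  erw [qbarA_of, qA_of]
  fin_cases i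
  · show pA m (genA 0) = Abelianization.of (RR m)
    rw [show genA 0 = ((Multiplicative.ofAdd 1 : Multiplicative (ZMod 2)), 1, 1) from rfl,
      pA_apply]
    simp [toAdd_one, ZMod.val_zero, ZMod.val_one]
  · show pA m (genA 1) = Abelianization.of (SS m)
    rw [show genA 1 = (1, (Multiplicative.ofAdd 1 : Multiplicative (ZMod 2)), 1) from rfl,
      pA_apply]
    simp [toAdd_one, ZMod.val_zero, ZMod.val_one]
  · show pA m (genA 2) = Abelianization.of (TT m)
    rw [show genA 2 = (1, 1, (Multiplicative.ofAdd 1 : Multiplicative (ZMod 2))) from rfl,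
      pA_apply]
    simp [toAdd_one, ZMod.val_zero, ZMod.val_one]

noncomputable def abIso : Ab ≃* A3 where
  toFun := qbarA m
  invFun := pA m
  left_inv a := by
    have := congrFun (congrArg DFunLike.coe (comp_pA_qbarA m)) a
    simpa using this
  right_inv a := by
    have := congrFun (congrArg DFunLike.coe (comp_qbarA_pA m)) a
    simpa using this
  map_mul' := map_mul _

end AbPart

/-! Commutator subgroup -/

instance : Finite (Gc m) := Finite.of_equiv _ (gcEquiv m).symm

def z0 : Gc m := ⟨2^(m+1), 2, false⟩
def s2 : Gc m := ⟨2, 0, false⟩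

lemma hz0 : z0 m ^ 2 = 1 := by
  rw [z0, pow_false, one_def]
  refine congrArg₂ (fun u v => Gc.mk u v _) ?_ (by decide)
  push_cast
  linear_combination e_mul_two m

lemma hs2 : s2 m ^ (2^(m+1)) = 1 := by
  rw [s2, pow_false, one_def]
  refine congrArg₂ (fun u v => Gc.mk u v _) ?_ (by push_cast; ring)
  push_cast
  linear_combination e_mul_two m

lemma comm_z0_s2 : ∀ (x : Multiplicative (ZMod 2)) (y : Multiplicative (ZMod (2^(m+1)))),
    Commute (homZM 2 (z0 m) (hz0 m) x) (homZM (2^(m+1)) (s2 m) (hs2 m) y) := by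
  intro x y
  have hc : Commute (z0 m) (s2 m) := by
    show z0 m * s2 m = s2 m * z0 m
    rw [z0, s2, mk_false_mul, mk_false_mul]
    refine congrArg₂ (fun u v => Gc.mk u v _) (by ring) (by ring)
  exact (hc.pow_left _).pow_right _

noncomputable def jmap : Multiplicative (ZMod 2) × Multiplicative (ZMod (2^(m+1))) →* Gc m :=
  MonoidHom.noncommCoprod (homZM 2 (z0 m) (hz0 m)) (homZM (2^(m+1)) (s2 m) (hs2 m))
    (comm_z0_s2 m)

lemma jmap_apply (x : Multiplicative (ZMod 2)) (y : Multiplicative (ZMod (2^(m+1)))) :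
    jmap m (x, y) = z0 m ^ (Multiplicative.toAdd x).val * s2 m ^ (Multiplicative.toAdd y).val :=
  rfl

lemma jmap_explicit (x : Multiplicative (ZMod 2)) (y : Multiplicative (ZMod (2^(m+1)))) :
    jmap m (x, y) = ⟨((Multiplicative.toAdd x).val : ZMod (M m)) * 2^(m+1) +
        ((Multiplicative.toAdd y).val : ZMod (M m)) * 2,
      ((Multiplicative.toAdd x).val : ZMod 4) * 2, false⟩ := by
  rw [jmap_apply, z0, s2, pow_false, pow_false, mk_false_mul]
  refine congrArg₂ (fun u v => Gc.mk u v _) (by ring) (by ring)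

lemma jmap_inj : Function.Injective (jmap m) := by
  rintro ⟨x, y⟩ ⟨x', y'⟩ h
  rw [jmap_explicit, jmap_explicit] at h
  have hb := congrArg Gc.b h
  have ha := congrArg Gc.a h
  simp only at hb ha
  have hxval : (Multiplicative.toAdd x).val = (Multiplicative.toAdd x').val := by
    have h1 : (((Multiplicative.toAdd x).val * 2 : ℕ) : ZMod 4)
        = (((Multiplicative.toAdd x').val * 2 : ℕ) : ZMod 4) := by push_cast; exact hb
    have l1 : (Multiplicative.toAdd x).val * 2 < 4 :=
      by have := ZMod.val_lt (Multiplicative.toAdd x); omega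
    have l2 : (Multiplicative.toAdd x').val * 2 < 4 :=
      by have := ZMod.val_lt (Multiplicative.toAdd x'); omega
    have := ZMod.val_cast_of_lt l1 ▸ ZMod.val_cast_of_lt l2 ▸ congrArg ZMod.val h1
    omega
  have hx : x = x' := Multiplicative.toAdd.injective (ZMod.val_injective _ hxval)
  subst hx
  have hyval : (Multiplicative.toAdd y).val = (Multiplicative.toAdd y').val := by
    have h2 : ((Multiplicative.toAdd y).val : ZMod (M m)) * 2
        = ((Multiplicative.toAdd y').val : ZMod (M m)) * 2 := by
      have := add_left_cancel ha
      exact this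
    have h3 : (((Multiplicative.toAdd y).val * 2 : ℕ) : ZMod (M m))
        = (((Multiplicative.toAdd y').val * 2 : ℕ) : ZMod (M m)) := by push_cast; exact h2
    have l1 : (Multiplicative.toAdd y).val * 2 < M m := by
      have := ZMod.val_lt (Multiplicative.toAdd y)
      have : (Multiplicative.toAdd y).val < 2^(m+1) := this
      have hM : M m = 2^(m+1) * 2 := by rw [M]; ring
      omega
    have l2 : (Multiplicative.toAdd y').val * 2 < M m := by
      have := ZMod.val_lt (Multiplicative.toAdd y')
      have : (Multiplicative.toAdd y').val < 2^(m+1) := this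
      have hM : M m = 2^(m+1) * 2 := by rw [M]; ring
      omega
    have := ZMod.val_cast_of_lt l1 ▸ ZMod.val_cast_of_lt l2 ▸ congrArg ZMod.val h3
    omega
  have hy : y = y' := Multiplicative.toAdd.injective (ZMod.val_injective _ hyval)
  rw [hy]

lemma hz0_eq : (S0 m) ^ (2^(m+1)) * (T0 m) ^ 2 = z0 m := by
  rw [S0_pow, T0_pow, mk_false_mul, z0]
  refine congrArg₂ (fun u v => Gc.mk u v _) (by push_cast; ring) (by push_cast; ring)

lemma hs2_eq : (S0 m) ^ 2 = s2 m := by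
  rw [S0_pow, s2]
  refine congrArg₂ (fun u v => Gc.mk u v _) (by push_cast; ring) rfl

open scoped commutatorElement in
lemma z0_mem_commutator : z0 m ∈ commutator (Gc m) := by
  have h : z0 m = ⁅(R0 m)⁻¹, (T0 m)⁻¹⁆ := by
    rw [commutatorElement_def, inv_inv, inv_inv, ← hz0_eq, ← rel7 m]
    rfl
  rw [h, commutator_def]
  exact Subgroup.commutator_mem_commutator (Subgroup.mem_top _) (Subgroup.mem_top _)

open scoped commutatorElement in
lemma s2_mem_commutator : s2 m ∈ commutator (Gc m) := by
  have h : s2 m = ⁅(R0 m)⁻¹, (S0 m)⁻¹⁆ := by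
    rw [commutatorElement_def, inv_inv, inv_inv, ← hs2_eq, ← rel6 m]
    rfl
  rw [h, commutator_def]
  exact Subgroup.commutator_mem_commutator (Subgroup.mem_top _) (Subgroup.mem_top _)

lemma range_le_commutator : (jmap m).range ≤ commutator (Gc m) := by
  rintro _ ⟨⟨x, y⟩, rfl⟩
  rw [jmap_apply]
  exact mul_mem (pow_mem (z0_mem_commutator m) _) (pow_mem (s2_mem_commutator m) _)

/-! `f3` and kernel computation -/

noncomputable def f3 : Gc m →* A3 := (qA m).comp (eIso m).symm.toMonoidHom

lemma genA_combo (x y z : Multiplicative (ZMod 2)) :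
    genA 0 ^ (Multiplicative.toAdd x).val * genA 1 ^ (Multiplicative.toAdd y).val *
      genA 2 ^ (Multiplicative.toAdd z).val = (x, y, z) := by
  simp only [genA, Prod.pow_mk, Prod.mk_mul_mk, one_pow, one_mul, mul_one]
  rw [ofAdd_one_pow_val, ofAdd_one_pow_val, ofAdd_one_pow_val]

lemma qA_surj : Function.Surjective (qA m) := by
  rintro ⟨x, y, z⟩
  refine ⟨RR m ^ (Multiplicative.toAdd x).val * SS m ^ (Multiplicative.toAdd y).val *
    TT m ^ (Multiplicative.toAdd z).val, ?_⟩
  rw [map_mul, map_mul, map_pow, map_pow, map_pow]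
  rw [show qA m (RR m) = genA 0 from qA_of m 0, show qA m (SS m) = genA 1 from qA_of m 1,
    show qA m (TT m) = genA 2 from qA_of m 2]
  exact genA_combo x y z

lemma f3_surj : Function.Surjective (f3 m) :=
  (qA_surj m).comp (eIso m).symm.surjective

lemma f3_z0 : f3 m (z0 m) = 1 := by
  have h1 : eIso m (SS m ^ (2^(m+1)) * TT m ^ 2) = z0 m := by
    show φG m (SS m ^ (2^(m+1)) * TT m ^ 2) = z0 m
    rw [map_mul, φG_S_pow, φG_T_pow, ← hz0_eq, S0_pow, T0_pow]
  have h2 : (eIso m).symm (z0 m) = SS m ^ (2^(m+1)) * TT m ^ 2 :=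
    (MulEquiv.symm_apply_eq _).mpr h1.symm
  show qA m ((eIso m).symm (z0 m)) = 1
  rw [h2, map_mul, map_pow, map_pow, show qA m (SS m) = genA 1 from qA_of m 1,
    show qA m (TT m) = genA 2 from qA_of m 2,
    show (2:ℕ)^(m+1) = 2 * 2^m by ring, genA_even, genA_sq, one_mul]

lemma f3_s2 : f3 m (s2 m) = 1 := by
  have h1 : eIso m (SS m ^ 2) = s2 m := by
    show φG m (SS m ^ 2) = s2 m
    rw [φG_S_pow, ← hs2_eq, S0_pow]
  have h2 : (eIso m).symm (s2 m) = SS m ^ 2 := (MulEquiv.symm_apply_eq _).mpr h1.symm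
  show qA m ((eIso m).symm (s2 m)) = 1
  rw [h2, map_pow, show qA m (SS m) = genA 1 from qA_of m 1, genA_sq]

lemma range_le_ker : (jmap m).range ≤ MonoidHom.ker (f3 m) := by
  rintro _ ⟨⟨x, y⟩, rfl⟩
  rw [MonoidHom.mem_ker, jmap_apply, map_mul, map_pow, map_pow, f3_z0, f3_s2]
  simp

lemma card_A3 : Nat.card A3 = 8 := by
  rw [Nat.card_prod, Nat.card_prod]
  rw [show Nat.card (Multiplicative (ZMod 2)) = 2 by
    rw [Nat.card_congr Multiplicative.ofAdd.symm, Nat.card_zmod]]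

lemma card_ker_f3 : Nat.card (MonoidHom.ker (f3 m)) = 2^(m+2) := by
  have h1 := Subgroup.card_eq_card_quotient_mul_card_subgroup (MonoidHom.ker (f3 m))
  have h2 : Nat.card (Gc m ⧸ MonoidHom.ker (f3 m)) = 8 := by
    rw [Nat.card_congr (QuotientGroup.quotientKerEquivOfSurjective _ (f3_surj m)).toEquiv]
    exact card_A3
  rw [card_Gc, h2] at h1
  have h3 : (2:ℕ)^(m+5) = 8 * 2^(m+2) := by ring
  rw [h3] at h1
  exact (Nat.eq_of_mul_eq_mul_left (by norm_num) h1).symm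

lemma card_range_jmap : Nat.card (jmap m).range = 2^(m+2) := by
  rw [← Nat.card_congr (MonoidHom.ofInjective (jmap_inj m)).toEquiv]
  rw [Nat.card_prod, Nat.card_congr Multiplicative.ofAdd.symm,
    Nat.card_congr Multiplicative.ofAdd.symm, Nat.card_zmod, Nat.card_zmod]
  ring

lemma range_eq_ker : (jmap m).range = MonoidHom.ker (f3 m) :=
  Subgroup.eq_of_le_of_card_ge (range_le_ker m)
    (le_of_eq (by rw [card_ker_f3, card_range_jmap]))

lemma commutator_Gc_eq : commutator (Gc m) = (jmap m).range := by
  refine le_antisymm ?_ (range_le_commutator m)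
  rw [range_eq_ker]
  exact Abelianization.commutator_subset_ker (f3 m)

lemma map_commutator_eq :
    Subgroup.map ((eIso m : Gamma (m+1) ≃* Gc m) : Gamma (m+1) →* Gc m)
      (commutator (Gamma (m+1))) = commutator (Gc m) := by
  have hsurj : Function.Surjective
      ⇑((eIso m : Gamma (m+1) ≃* Gc m) : Gamma (m+1) →* Gc m) := (eIso m).surjective
  rw [commutator_def, commutator_def, Subgroup.map_commutator,
    Subgroup.map_top_of_surjective _ hsurj]

noncomputable def commIso : (commutator (Gamma (m+1))) ≃*
    Multiplicative (ZMod 2) × Multiplicative (ZMod (2^(m+1))) :=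
  (((eIso m).subgroupMap (commutator (Gamma (m+1)))).trans
    (MulEquiv.subgroupCongr (by rw [map_commutator_eq, commutator_Gc_eq]))).trans
    (MonoidHom.ofInjective (jmap_inj m)).symm

end GammaAux

open GammaPresentation in
/-- `Γ_n` has order `2^(n+4)`, abelianization `(ℤ/2)³`, and abelian commutator
subgroup isomorphic to `(ℤ/2) × (ℤ/2^n)`. -/
theorem Gamma_card_abelianization_commutator (n : ℕ) (hn : 1 ≤ n) :
    Nat.card (Gamma n) = 2 ^ (n + 4) ∧
      Nonempty (Abelianization (Gamma n) ≃*
        (Multiplicative (ZMod 2) × Multiplicative (ZMod 2) × Multiplicative (ZMod 2))) ∧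
      Nonempty ((commutator (Gamma n)) ≃*
        (Multiplicative (ZMod 2) × Multiplicative (ZMod (2 ^ n)))) := by
  obtain ⟨m, rfl⟩ : ∃ m, n = m + 1 := ⟨n - 1, (Nat.succ_pred_eq_of_pos hn).symm⟩
  exact ⟨GammaAux.card_Gamma m, ⟨GammaAux.abIso m⟩, ⟨GammaAux.commIso m⟩⟩
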